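/- In a bowtie κ = χ ⋈_{x*,y*} ξ of chirotopes, for any nonempty subsets X' ⊆ X and Y' ⊆ Y the number of maximal sets of pairwise noncrossing edges between X' and Y' equals the binomial coefficient C(|X'|+|Y'|−2, |Y'|−1). -/

import Mathlib

/-- A sign function on the (finite) ground set `S`: defined on triples of
pairwise distinct elements of `S`, with values in `{-1, +1}`, alternating
under permutations of the arguments. -/
def SignFnOn {T : Type*} (χ : T → T → T → ℤ) (S : Finset T) : Prop :=
  ∀ x ∈ S, ∀ y ∈ S, ∀ z ∈ S, x ≠ y → y ≠ z → x ≠ z →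
    (χ x y z = 1 ∨ χ x y z = -1) ∧ χ x y z = χ y z x ∧ χ x y z = -χ y x z

/-- The interiority axiom on the ground set `S`. -/
def InteriorityOn {T : Type*} (χ : T → T → T → ℤ) (S : Finset T) : Prop :=
  ∀ t ∈ S, ∀ x ∈ S, ∀ y ∈ S, ∀ z ∈ S,
    t ≠ x → t ≠ y → t ≠ z → x ≠ y → x ≠ z → y ≠ z →
    χ t y z = 1 → χ x t z = 1 → χ x y t = 1 → χ x y z = 1

/-- The transitivity axiom on the ground set `S`. -/
def TransitivityOn {T : Type*} (χ : T → T → T → ℤ) (S : Finset T) : Prop :=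
  ∀ s ∈ S, ∀ t ∈ S, ∀ x ∈ S, ∀ y ∈ S, ∀ z ∈ S,
    s ≠ t → s ≠ x → s ≠ y → s ≠ z → t ≠ x → t ≠ y → t ≠ z →
    x ≠ y → x ≠ z → y ≠ z →
    χ t s x = 1 → χ t s y = 1 → χ t s z = 1 → χ x y t = 1 → χ y z t = 1 →
    χ x z t = 1

/-- A chirotope on the ground set `S`. -/
def ChirotopeOn {T : Type*} (χ : T → T → T → ℤ) (S : Finset T) : Prop :=
  SignFnOn χ S ∧ InteriorityOn χ S ∧ TransitivityOn χ S

/-- `x` is extreme in the chirotope `χ` on ground set `S`: `x ∈ S` and there is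
`y ∈ S \ {x}` such that `χ x y z` takes the same value for all
`z ∈ S \ {x, y}`. -/
def ExtremeInOn {T : Type*} (χ : T → T → T → ℤ) (S : Finset T) (x : T) : Prop :=
  x ∈ S ∧ ∃ y ∈ S, y ≠ x ∧ ∃ c : ℤ, ∀ z ∈ S, z ≠ x → z ≠ y → χ x y z = c

/-- Replace every element outside `S` by the proxy `p`. -/
def projTo {T : Type*} [DecidableEq T] (S : Finset T) (p : T) (u : T) : T :=
  if u ∈ S then u else p

/-- The bowtie `χ ⋈_{xs, ys} ξ` of a sign function `χ` on `X ∪ {xs}` and a sign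
function `ξ` on `Y ∪ {ys}`: on a triple of elements of `X ∪ Y`, if the majority
of the elements lies in `X` use `χ`, replacing the (possible) element of `Y` by
the proxy `xs`; otherwise use `ξ`, replacing the (possible) element of `X` by
the proxy `ys`.  This agrees with the definition on the four distinguished
kinds of triples, extended by the symmetry condition. -/
def bowtie {T : Type*} [DecidableEq T] (χ : T → T → T → ℤ) (X : Finset T)
    (xs : T) (ξ : T → T → T → ℤ) (Y : Finset T) (ys : T) : T → T → T → ℤ :=
  fun u v w =>
    if 2 ≤ ((if u ∈ X then 1 else 0) + (if v ∈ X then 1 else 0) +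
        (if w ∈ X then 1 else 0) : ℕ) then
      χ (projTo X xs u) (projTo X xs v) (projTo X xs w)
    else
      ξ (projTo Y ys u) (projTo Y ys v) (projTo Y ys w)

/-- The segments `pq` and `rs` (with pairwise distinct endpoints) cross in the
chirotope `κ`. -/
def Crosses {T : Type*} (κ : T → T → T → ℤ) (p q r s : T) : Prop :=
  κ p q r = -(κ p q s) ∧ κ r s p = -(κ r s q)

/-- A finite set of segments is pairwise noncrossing in `κ`. -/
def NoncrossingF {T : Type*} (κ : T → T → T → ℤ) (E : Finset (Sym2 T)) : Prop :=
  ∀ p q r s : T, Sym2.mk p q ∈ E → Sym2.mk r s ∈ E →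
    p ≠ q → r ≠ s → p ≠ r → p ≠ s → q ≠ r → q ≠ s → ¬ Crosses κ p q r s

/-- Every element of `H` is an edge between `X'` and `Y'`. -/
def EdgesBetween {T : Type*} (X' Y' : Finset T) (H : Finset (Sym2 T)) : Prop :=
  ∀ e ∈ H, ∃ x ∈ X', ∃ y ∈ Y', e = Sym2.mk x y

/-- `H` is a maximal set of pairwise noncrossing (in `κ`) edges between `X'`
and `Y'`: no further edge between `X'` and `Y'` can be added without creating
a crossing. -/
def MaxNoncrossingBetween {T : Type*} [DecidableEq T] (κ : T → T → T → ℤ)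
    (X' Y' : Finset T) (H : Finset (Sym2 T)) : Prop :=
  EdgesBetween X' Y' H ∧ NoncrossingF κ H ∧
    ∀ x ∈ X', ∀ y ∈ Y',
      NoncrossingF κ (insert (Sym2.mk x y) H) → Sym2.mk x y ∈ H

open Classical in
/-- The degree of `v` in the finite set of segments `H`. -/
noncomputable def degF {T : Type*} (H : Finset (Sym2 T)) (v : T) : ℕ :=
  (H.filter (fun e => v ∈ e)).card



/-- A maximal chain in the grid `[0,m) × [0,n)` (with the product order). -/
def GoodChain (m n : ℕ) (S : Finset (ℕ × ℕ)) : Prop :=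
  (∀ p ∈ S, p.1 < m ∧ p.2 < n) ∧
  (∀ p ∈ S, ∀ q ∈ S, (p.1 ≤ q.1 ∧ p.2 ≤ q.2) ∨ (q.1 ≤ p.1 ∧ q.2 ≤ p.2)) ∧
  (∀ p : ℕ × ℕ, p.1 < m → p.2 < n →
    (∀ q ∈ S, (p.1 ≤ q.1 ∧ p.2 ≤ q.2) ∨ (q.1 ≤ p.1 ∧ q.2 ≤ p.2)) → p ∈ S)

lemma goodChain_finite (m n : ℕ) : Finite {S // GoodChain m n S} := by
  apply Finite.of_injective
    (fun S : {S // GoodChain m n S} =>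
      (⟨S.1, by
        rw [Finset.mem_powerset]
        intro p hp
        rcases S.2.1 p hp with ⟨h1, h2⟩
        simp [Finset.mem_product, Finset.mem_range, h1, h2]⟩ :
        {A // A ∈ (Finset.range m ×ˢ Finset.range n).powerset}))
  intro a b h
  simp only [Subtype.mk.injEq] at h
  exact Subtype.ext h

lemma top_mem {m n : ℕ} {S : Finset (ℕ × ℕ)} (hm : 1 ≤ m) (hn : 1 ≤ n)
    (h : GoodChain m n S) : (m - 1, n - 1) ∈ S := by
  apply h.2.2 _ (by omega) (by omega)
  intro q hq
  rcases h.1 q hq with ⟨h1, h2⟩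
  right
  refine ⟨?_, ?_⟩ <;> show _ ≤ _ - 1 <;> omega

lemma sec_top {m n : ℕ} {S : Finset (ℕ × ℕ)} (hm : 2 ≤ m) (hn : 2 ≤ n)
    (h : GoodChain m n S) (hc : (m - 2, n - 1) ∉ S) :
    ∀ q ∈ S, q.2 = n - 1 → q.1 = m - 1 := by
  intro q hq hq2
  by_contra hne
  have hq1 : q.1 < m := (h.1 q hq).1
  apply hc
  apply h.2.2 _ (by omega) (by omega)
  intro r hr
  rcases h.1 r hr with ⟨hr1, hr2⟩
  by_cases hc1 : r.1 ≤ m - 2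
  · right; exact ⟨hc1, by omega⟩
  · -- r.1 = m - 1 : use chain compat of q and r
    rcases h.2.1 q hq r hr with ⟨h1, h2⟩ | ⟨h1, h2⟩
    · left; constructor <;> omega
    · omega

lemma alt_mem {m n : ℕ} {S : Finset (ℕ × ℕ)} (hm : 2 ≤ m) (hn : 2 ≤ n)
    (h : GoodChain m n S) (hc : (m - 2, n - 1) ∉ S) : (m - 1, n - 2) ∈ S := by
  apply h.2.2 _ (by omega) (by omega)
  intro r hr
  rcases h.1 r hr with ⟨hr1, hr2⟩
  by_cases hd : r.2 ≤ n - 2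
  · right; exact ⟨by omega, hd⟩
  · have : r.2 = n - 1 := by omega
    have := sec_top hm hn h hc r hr this
    left; constructor <;> omega

lemma eraseL {m n : ℕ} {S : Finset (ℕ × ℕ)} (hm : 2 ≤ m) (hn : 1 ≤ n)
    (h : GoodChain m n S) (hc : (m - 2, n - 1) ∈ S) :
    GoodChain (m - 1) n (S.erase (m - 1, n - 1)) := by
  have hb1 : ∀ p ∈ S.erase (m - 1, n - 1), p.1 < m - 1 ∧ p.2 < n := by
    intro p hp
    have hpS := Finset.mem_of_mem_erase hp
    have hpne := Finset.ne_of_mem_erase hp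
    rcases h.1 p hpS with ⟨h1, h2⟩
    refine ⟨?_, h2⟩
    by_contra hge
    have hp1 : p.1 = m - 1 := by omega
    rcases h.2.1 p hpS _ hc with ⟨u1, u2⟩ | ⟨u1, u2⟩
    · simp only at u1 u2; omega
    · simp only at u1 u2
      have : p.2 = n - 1 := by omega
      exact hpne (Prod.ext hp1 this)
  refine ⟨hb1, ?_, ?_⟩
  · intro p hp q hq
    exact h.2.1 p (Finset.mem_of_mem_erase hp) q (Finset.mem_of_mem_erase hq)
  · intro p hp1 hp2 hcomp
    have hpS : p ∈ S := by
      apply h.2.2 p (by omega) hp2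
      intro q hq
      by_cases hq' : q = (m - 1, n - 1)
      · subst hq'; left; constructor <;> show _ ≤ _ - 1 <;> omega
      · exact hcomp q (Finset.mem_erase.2 ⟨hq', hq⟩)
    exact Finset.mem_erase.2 ⟨by intro he; rw [he] at hp1; simp at hp1, hpS⟩

lemma eraseR {m n : ℕ} {S : Finset (ℕ × ℕ)} (hm : 2 ≤ m) (hn : 2 ≤ n)
    (h : GoodChain m n S) (hc : (m - 2, n - 1) ∉ S) :
    GoodChain m (n - 1) (S.erase (m - 1, n - 1)) := by
  have hb1 : ∀ p ∈ S.erase (m - 1, n - 1), p.1 < m ∧ p.2 < n - 1 := by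
    intro p hp
    have hpS := Finset.mem_of_mem_erase hp
    have hpne := Finset.ne_of_mem_erase hp
    rcases h.1 p hpS with ⟨h1, h2⟩
    refine ⟨h1, ?_⟩
    by_contra hge
    have hp2 : p.2 = n - 1 := by omega
    have := sec_top hm hn h hc p hpS hp2
    exact hpne (Prod.ext this hp2)
  refine ⟨hb1, ?_, ?_⟩
  · intro p hp q hq
    exact h.2.1 p (Finset.mem_of_mem_erase hp) q (Finset.mem_of_mem_erase hq)
  · intro p hp1 hp2 hcomp
    have hpS : p ∈ S := by
      apply h.2.2 p hp1 (by omega)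
      intro q hq
      by_cases hq' : q = (m - 1, n - 1)
      · subst hq'; left; constructor <;> show _ ≤ _ - 1 <;> omega
      · exact hcomp q (Finset.mem_erase.2 ⟨hq', hq⟩)
    exact Finset.mem_erase.2 ⟨by intro he; rw [he] at hp2; simp at hp2, hpS⟩

lemma insL {m n : ℕ} {S : Finset (ℕ × ℕ)} (hm : 2 ≤ m) (hn : 1 ≤ n)
    (h : GoodChain (m - 1) n S) :
    GoodChain m n (insert (m - 1, n - 1) S) := by
  refine ⟨?_, ?_, ?_⟩
  · intro p hp
    rcases Finset.mem_insert.1 hp with rfl | hp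
    · constructor <;> simp <;> omega
    · rcases h.1 p hp with ⟨h1, h2⟩; exact ⟨by omega, h2⟩
  · intro p hp q hq
    rcases Finset.mem_insert.1 hp with rfl | hp <;>
      rcases Finset.mem_insert.1 hq with rfl | hq
    · left; exact ⟨le_refl _, le_refl _⟩
    · rcases h.1 q hq with ⟨h1, h2⟩; right; constructor <;> show _ ≤ _ - 1 <;> omega
    · rcases h.1 p hp with ⟨h1, h2⟩; left; constructor <;> show _ ≤ _ - 1 <;> omega
    · exact h.2.1 p hp q hq
  · intro p hp1 hp2 hcomp
    by_cases hp1' : p.1 < m - 1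
    · apply Finset.mem_insert_of_mem
      apply h.2.2 p hp1' hp2
      intro q hq
      exact hcomp q (Finset.mem_insert_of_mem hq)
    · have hpm : p.1 = m - 1 := by omega
      have htop : (m - 1 - 1, n - 1) ∈ S := top_mem (by omega) hn h
      have h2 : m - 1 - 1 = m - 2 := by omega
      rw [h2] at htop
      rcases hcomp _ (Finset.mem_insert_of_mem htop) with ⟨u1, u2⟩ | ⟨u1, u2⟩
      · simp only at u1 u2; omega
      · simp only at u1 u2
        have hpn : p.2 = n - 1 := by omega
        have : p = (m - 1, n - 1) := Prod.ext hpm hpn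
        rw [this]; exact Finset.mem_insert_self _ _

lemma insR {m n : ℕ} {S : Finset (ℕ × ℕ)} (hm : 1 ≤ m) (hn : 2 ≤ n)
    (h : GoodChain m (n - 1) S) :
    GoodChain m n (insert (m - 1, n - 1) S) := by
  refine ⟨?_, ?_, ?_⟩
  · intro p hp
    rcases Finset.mem_insert.1 hp with rfl | hp
    · constructor <;> simp <;> omega
    · rcases h.1 p hp with ⟨h1, h2⟩; exact ⟨h1, by omega⟩
  · intro p hp q hq
    rcases Finset.mem_insert.1 hp with rfl | hp <;>
      rcases Finset.mem_insert.1 hq with rfl | hq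
    · left; exact ⟨le_refl _, le_refl _⟩
    · rcases h.1 q hq with ⟨h1, h2⟩; right; constructor <;> show _ ≤ _ - 1 <;> omega
    · rcases h.1 p hp with ⟨h1, h2⟩; left; constructor <;> show _ ≤ _ - 1 <;> omega
    · exact h.2.1 p hp q hq
  · intro p hp1 hp2 hcomp
    by_cases hp2' : p.2 < n - 1
    · apply Finset.mem_insert_of_mem
      apply h.2.2 p hp1 hp2'
      intro q hq
      exact hcomp q (Finset.mem_insert_of_mem hq)
    · have hpn : p.2 = n - 1 := by omega
      have htop : (m - 1, n - 1 - 1) ∈ S := top_mem hm (by omega) h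
      have h2 : n - 1 - 1 = n - 2 := by omega
      rw [h2] at htop
      rcases hcomp _ (Finset.mem_insert_of_mem htop) with ⟨u1, u2⟩ | ⟨u1, u2⟩
      · simp only at u1 u2; omega
      · simp only at u1 u2
        have hpm : p.1 = m - 1 := by omega
        have : p = (m - 1, n - 1) := Prod.ext hpm hpn
        rw [this]; exact Finset.mem_insert_self _ _

theorem card_goodChain : ∀ k m n : ℕ, m + n ≤ k → 1 ≤ m → 1 ≤ n →
    Nat.card {S // GoodChain m n S} = (m + n - 2).choose (n - 1) := by
  intro k
  induction k with
  | zero => intro m n hk hm hn; omega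
  | succ k ih =>
    intro m n hk hm hn
    by_cases hn1 : n = 1
    · subst hn1
      have huniq : ∀ S, GoodChain m 1 S → S = Finset.range m ×ˢ {0} := by
        intro S hS
        apply Finset.ext
        intro p
        simp only [Finset.mem_product, Finset.mem_range, Finset.mem_singleton]
        constructor
        · intro hp
          rcases hS.1 p hp with ⟨h1, h2⟩
          exact ⟨h1, by omega⟩
        · rintro ⟨h1, h2⟩
          apply hS.2.2 p h1 (by omega)
          intro q hq
          rcases hS.1 q hq with ⟨u1, u2⟩
          rcases Nat.le_total p.1 q.1 with hle | hle
          · left; exact ⟨hle, by omega⟩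
          · right; exact ⟨hle, by omega⟩
      have hgood : GoodChain m 1 (Finset.range m ×ˢ {0}) := by
        refine ⟨?_, ?_, ?_⟩
        · intro p hp
          simp only [Finset.mem_product, Finset.mem_range, Finset.mem_singleton] at hp
          exact ⟨hp.1, by omega⟩
        · intro p hp q hq
          simp only [Finset.mem_product, Finset.mem_range, Finset.mem_singleton] at hp hq
          rcases Nat.le_total p.1 q.1 with hle | hle
          · left; exact ⟨hle, by omega⟩
          · right; exact ⟨hle, by omega⟩
        · intro p h1 h2 _
          simp only [Finset.mem_product, Finset.mem_range, Finset.mem_singleton]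
          exact ⟨h1, by omega⟩
      have h1 : Nat.card {S // GoodChain m 1 S} = 1 := by
        rw [Nat.card_eq_one_iff_unique]
        refine ⟨⟨?_⟩, ⟨⟨_, hgood⟩⟩⟩
        intro a b
        apply Subtype.ext
        rw [huniq a.1 a.2, huniq b.1 b.2]
      rw [h1]
      simp
    · by_cases hm1 : m = 1
      · subst hm1
        have huniq : ∀ S, GoodChain 1 n S → S = {0} ×ˢ Finset.range n := by
          intro S hS
          apply Finset.ext
          intro p
          simp only [Finset.mem_product, Finset.mem_range, Finset.mem_singleton]
          constructor
          · intro hp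
            rcases hS.1 p hp with ⟨h1, h2⟩
            exact ⟨by omega, h2⟩
          · rintro ⟨h1, h2⟩
            apply hS.2.2 p (by omega) h2
            intro q hq
            rcases hS.1 q hq with ⟨u1, u2⟩
            rcases Nat.le_total p.2 q.2 with hle | hle
            · left; exact ⟨by omega, hle⟩
            · right; exact ⟨by omega, hle⟩
        have hgood : GoodChain 1 n ({0} ×ˢ Finset.range n) := by
          refine ⟨?_, ?_, ?_⟩
          · intro p hp
            simp only [Finset.mem_product, Finset.mem_range, Finset.mem_singleton] at hp
            exact ⟨by omega, hp.2⟩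
          · intro p hp q hq
            simp only [Finset.mem_product, Finset.mem_range, Finset.mem_singleton] at hp hq
            rcases Nat.le_total p.2 q.2 with hle | hle
            · left; exact ⟨by omega, hle⟩
            · right; exact ⟨by omega, hle⟩
          · intro p h1 h2 _
            simp only [Finset.mem_product, Finset.mem_range, Finset.mem_singleton]
            exact ⟨by omega, h2⟩
        have h1 : Nat.card {S // GoodChain 1 n S} = 1 := by
          rw [Nat.card_eq_one_iff_unique]
          refine ⟨⟨?_⟩, ⟨⟨_, hgood⟩⟩⟩
          intro a b
          apply Subtype.ext
          rw [huniq a.1 a.2, huniq b.1 b.2]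
        rw [h1]
        have h2 : 1 + n - 2 = n - 1 := by omega
        rw [h2, Nat.choose_self]
      · -- step case : m ≥ 2 and n ≥ 2
        have hm2 : 2 ≤ m := by omega
        have hn2 : 2 ≤ n := by omega
        haveI := goodChain_finite m n
        haveI := goodChain_finite (m - 1) n
        haveI := goodChain_finite m (n - 1)
        have E : {S // GoodChain m n S} ≃
            ({S // GoodChain (m - 1) n S} ⊕ {S // GoodChain m (n - 1) S}) := by
          refine ⟨fun S => if hc : (m - 2, n - 1) ∈ S.1 then
              Sum.inl ⟨S.1.erase (m - 1, n - 1), eraseL hm2 (by omega) S.2 hc⟩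
            else Sum.inr ⟨S.1.erase (m - 1, n - 1), eraseR hm2 hn2 S.2 hc⟩,
            fun S => match S with
              | Sum.inl S => ⟨insert (m - 1, n - 1) S.1, insL hm2 (by omega) S.2⟩
              | Sum.inr S => ⟨insert (m - 1, n - 1) S.1, insR (by omega) hn2 S.2⟩,
            ?_, ?_⟩
          · rintro ⟨S, hS⟩
            by_cases hc : (m - 2, n - 1) ∈ S
            · simp only [dif_pos hc]
              exact Subtype.ext (Finset.insert_erase (top_mem (by omega) (by omega) hS))
            · simp only [dif_neg hc]
              exact Subtype.ext (Finset.insert_erase (top_mem (by omega) (by omega) hS))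
          · rintro (⟨S, hS⟩ | ⟨S, hS⟩)
            · have htopnot : (m - 1, n - 1) ∉ S := by
                intro hmem
                have := (hS.1 _ hmem).1
                simp only at this; omega
              have hmem : (m - 2, n - 1) ∈ insert (m - 1, n - 1) S := by
                apply Finset.mem_insert_of_mem
                have htop := top_mem (m := m - 1) (n := n) (by omega) (by omega) hS
                have h2 : m - 1 - 1 = m - 2 := by omega
                rwa [h2] at htop
              simp only [dif_pos hmem]
              exact congrArg Sum.inl (Subtype.ext (Finset.erase_insert htopnot))
            · have htopnot : (m - 1, n - 1) ∉ S := by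
                intro hmem
                have := (hS.1 _ hmem).2
                simp only at this; omega
              have hmem : (m - 2, n - 1) ∉ insert (m - 1, n - 1) S := by
                intro hmem
                rcases Finset.mem_insert.1 hmem with heq | hmem
                · have := congrArg Prod.fst heq
                  simp only at this; omega
                · have := (hS.1 _ hmem).2
                  simp only at this; omega
              simp only [dif_neg hmem]
              exact congrArg Sum.inr (Subtype.ext (Finset.erase_insert htopnot))
        rw [Nat.card_congr E, Nat.card_sum,
          ih (m - 1) n (by omega) (by omega) (by omega),
          ih m (n - 1) (by omega) (by omega) (by omega)]
        obtain ⟨a, rfl⟩ : ∃ a, m = a + 2 := ⟨m - 2, by omega⟩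
        obtain ⟨b, rfl⟩ : ∃ b, n = b + 2 := ⟨n - 2, by omega⟩
        have e1 : a + 2 - 1 + (b + 2) - 2 = a + b + 1 := by omega
        have e3 : a + 2 + (b + 2 - 1) - 2 = a + b + 1 := by omega
        have e4 : b + 2 - 1 - 1 = b := by omega
        have e5 : a + 2 + (b + 2) - 2 = a + b + 1 + 1 := by omega
        have e2 : b + 2 - 1 = b + 1 := by omega
        rw [e1, e3, e4, e5, e2, Nat.choose_succ_succ (a + b + 1) b]
        simp only [Nat.succ_eq_add_one]
        omega

section SignHelpers

variable {T : Type*} {χ : T → T → T → ℤ} {S : Finset T} {a b c : T}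

lemma sgn_val (h : SignFnOn χ S) (ha : a ∈ S) (hb : b ∈ S) (hc : c ∈ S)
    (hab : a ≠ b) (hbc : b ≠ c) (hac : a ≠ c) : χ a b c = 1 ∨ χ a b c = -1 :=
  (h a ha b hb c hc hab hbc hac).1

lemma sgn_cyc (h : SignFnOn χ S) (ha : a ∈ S) (hb : b ∈ S) (hc : c ∈ S)
    (hab : a ≠ b) (hbc : b ≠ c) (hac : a ≠ c) : χ a b c = χ b c a :=
  (h a ha b hb c hc hab hbc hac).2.1

lemma sgn_swap12 (h : SignFnOn χ S) (ha : a ∈ S) (hb : b ∈ S) (hc : c ∈ S)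
    (hab : a ≠ b) (hbc : b ≠ c) (hac : a ≠ c) : χ a b c = -χ b a c :=
  (h a ha b hb c hc hab hbc hac).2.2

lemma sgn_swap13 (h : SignFnOn χ S) (ha : a ∈ S) (hb : b ∈ S) (hc : c ∈ S)
    (hab : a ≠ b) (hbc : b ≠ c) (hac : a ≠ c) : χ a b c = -χ c b a := by
  have h1 := sgn_cyc h ha hb hc hab hbc hac
  have h2 := sgn_swap12 h hb hc ha hbc hac.symm hab.symm
  omega

lemma sgn_swap23 (h : SignFnOn χ S) (ha : a ∈ S) (hb : b ∈ S) (hc : c ∈ S)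
    (hab : a ≠ b) (hbc : b ≠ c) (hac : a ≠ c) : χ a b c = -χ a c b := by
  have h1 := sgn_cyc h ha hc hb hac hbc.symm hab
  have h2 := sgn_swap13 h ha hb hc hab hbc hac
  omega

lemma sgn_cyc2 (h : SignFnOn χ S) (ha : a ∈ S) (hb : b ∈ S) (hc : c ∈ S)
    (hab : a ≠ b) (hbc : b ≠ c) (hac : a ≠ c) : χ a b c = χ c a b := by
  have h1 := sgn_cyc h ha hb hc hab hbc hac
  have h2 := sgn_cyc h hb hc ha hbc hac.symm hab.symm
  omega

end SignHelpers

/-- Transitivity of the rotational order about an extreme point. -/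
lemma chi_trans {T : Type*} {χ : T → T → T → ℤ} {S : Finset T} {xs : T}
    (hχ : ChirotopeOn χ S) (hx : ExtremeInOn χ S xs) :
    ∀ u ∈ S, ∀ v ∈ S, ∀ w ∈ S, u ≠ xs → v ≠ xs → w ≠ xs → u ≠ v → v ≠ w → u ≠ w →
    χ xs u v = 1 → χ xs v w = 1 → χ xs u w = 1 := by
  obtain ⟨hsgn, hint, htr⟩ := hχ
  obtain ⟨hxsS, y0, hy0S, hy0ne, c, hc⟩ := hx
  intro u huS v hvS w hwS hu hv hw huv hvw huw h1 h2
  by_contra hne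
  have hval := sgn_val hsgn hxsS huS hwS hu.symm huw hw.symm
  have h3 : χ xs u w = -1 := by rcases hval with h | h; exact absurd h hne; exact h
  by_cases hyu : y0 = u
  · subst hyu
    have hcv := hc v hvS hv huv.symm
    have hcw := hc w hwS hw huw.symm
    omega
  by_cases hyv : y0 = v
  · subst hyv
    have hcu := hc u huS hu huv
    have hcw := hc w hwS hw hvw.symm
    have hsw := sgn_swap23 hsgn hxsS huS hvS hu.symm huv hv.symm
    omega
  by_cases hyw : y0 = w
  · subst hyw
    have hcu := hc u huS hu huw
    have hcv := hc v hvS hv hvw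
    have hsw1 := sgn_swap23 hsgn hxsS huS hwS hu.symm huw hw.symm
    have hsw2 := sgn_swap23 hsgn hxsS hvS hwS hv.symm hvw hw.symm
    omega
  have hy0u : y0 ≠ u := hyu
  have hy0v : y0 ≠ v := hyv
  have hy0w : y0 ≠ w := hyw
  have hxy0 : xs ≠ y0 := hy0ne.symm
  have hxu : xs ≠ u := hu.symm
  have hxv : xs ≠ v := hv.symm
  have hxw : xs ≠ w := hw.symm
  have hcu := hc u huS hu hy0u.symm
  have hcv := hc v hvS hv hy0v.symm
  have hcw := hc w hwS hw hy0w.symm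
  have hcval : c = 1 ∨ c = -1 := by
    have := sgn_val hsgn hxsS hy0S huS hxy0 hy0u hxu
    omega
  have p1 : χ xs u v = χ u v xs := sgn_cyc hsgn hxsS huS hvS hxu huv hxv
  have p17 : χ xs v w = χ v w xs := sgn_cyc hsgn hxsS hvS hwS hxv hvw hxw
  have e3 : χ xs u w = χ u w xs := sgn_cyc hsgn hxsS huS hwS hxu huw hxw
  rcases hcval with hc1 | hc1
  · -- c = 1 : direct transitivity with pivot (xs, y0)
    have := htr y0 hy0S xs hxsS u huS v hvS w hwS hy0ne hy0u hy0v hy0w hxu hxv hxw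
      huv huw hvw (by omega) (by omega) (by omega) (by omega) (by omega)
    omega
  · -- c = -1 : the five-point configuration
    have p6 : χ xs y0 u = -χ xs u y0 := sgn_swap23 hsgn hxsS hy0S huS hxy0 hy0u hxu
    have p20 : χ xs y0 v = -χ xs v y0 := sgn_swap23 hsgn hxsS hy0S hvS hxy0 hy0v hxv
    have p16 : χ xs y0 w = -χ xs w y0 := sgn_swap23 hsgn hxsS hy0S hwS hxy0 hy0w hxw
    have hB1 : χ xs u y0 = 1 := by omega
    have hB2 : χ xs v y0 = 1 := by omega
    have hB3 : χ xs w y0 = 1 := by omega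
    have p2 : χ u xs w = -χ xs u w := sgn_swap12 hsgn huS hxsS hwS hu hxw huw
    have hD : χ u v w = 1 := by
      apply hint xs hxsS u huS v hvS w hwS hxu hxv hxw huv huw hvw h2 (by omega) (by omega)
    have p3 : χ y0 u v = χ u v y0 := sgn_cyc hsgn hy0S huS hvS hy0u huv hy0v
    have p4 : χ xs u w = -χ xs w u := sgn_swap23 hsgn hxsS huS hwS hxu huw hxw
    have p5 : χ y0 u w = χ w y0 u := sgn_cyc2 hsgn hy0S huS hwS hy0u huw hy0w
    have p7 : χ y0 xs u = -χ xs y0 u := sgn_swap12 hsgn hy0S hxsS huS hy0ne hxu hy0u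
    have p8 : χ y0 xs v = -χ xs y0 v := sgn_swap12 hsgn hy0S hxsS hvS hy0ne hxv hy0v
    have p9 : χ y0 xs w = -χ xs y0 w := sgn_swap12 hsgn hy0S hxsS hwS hy0ne hxw hy0w
    have p10 : χ y0 v w = χ v w y0 := sgn_cyc hsgn hy0S hvS hwS hy0v hvw hy0w
    have p11 : χ y0 u w = χ u w y0 := sgn_cyc hsgn hy0S huS hwS hy0u huw hy0w
    have p12 : χ xs w u = χ w u xs := sgn_cyc hsgn hxsS hwS huS hxw huw.symm hxu
    have p13 : χ u v w = χ w u v := sgn_cyc2 hsgn huS hvS hwS huv hvw huw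
    have p14 : χ w u y0 = -χ u w y0 := sgn_swap12 hsgn hwS huS hy0S huw.symm hy0u.symm hy0w.symm
    have p15 : χ v y0 w = -χ y0 v w := sgn_swap12 hsgn hvS hy0S hwS hy0v.symm hy0w hvw
    have p18 : χ u v w = χ v w u := sgn_cyc hsgn huS hvS hwS huv hvw huw
    have p19 : χ u y0 v = -χ y0 u v := sgn_swap12 hsgn huS hy0S hvS hy0u.symm hy0v huv
    have p21 : χ y0 v w = -χ y0 w v := sgn_swap23 hsgn hy0S hvS hwS hy0v hvw hy0w
    have p22 : χ u v w = -χ u w v := sgn_swap23 hsgn huS hvS hwS huv hvw huw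
    have hE1 := sgn_val hsgn hy0S huS hvS hy0u huv hy0v
    have hE2 := sgn_val hsgn hy0S huS hwS hy0u huw hy0w
    have hE3 := sgn_val hsgn hy0S hvS hwS hy0v hvw hy0w
    have caseA : χ y0 u v = 1 → χ y0 u w = 1 → False := by
      intro hA1 hA2
      have := htr v hvS u huS xs hxsS w hwS y0 hy0S huv.symm hv hvw hy0v.symm hu huw
        hy0u.symm hxw hxy0 hy0w.symm (by omega) (by omega) (by omega) (by omega) (by omega)
      omega
    have caseB : χ y0 u v = 1 → χ y0 v w = 1 → χ y0 u w = 1 := by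
      intro hA1 hA2
      have := htr xs hxsS y0 hy0S u huS v hvS w hwS hxy0 hxu hxv hxw hy0u hy0v hy0w
        huv huw hvw (by omega) (by omega) (by omega) (by omega) (by omega)
      omega
    have caseC : χ y0 u w = -1 → χ y0 v w = -1 → False := by
      intro hA1 hA2
      have := htr u huS w hwS xs hxsS v hvS y0 hy0S huw hu huv hy0u.symm hw hvw.symm
        hy0w.symm hxv hxy0 hy0v.symm (by omega) (by omega) (by omega) (by omega) (by omega)
      omega
    have caseD : χ y0 u v = -1 → χ y0 v w = 1 → False := by
      intro hA1 hA2
      have := htr w hwS v hvS xs hxsS u huS y0 hy0S hvw.symm hw huw.symm hy0w.symm hv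
        huv.symm hy0v.symm hxu hxy0 hy0u.symm (by omega) (by omega) (by omega) (by omega)
        (by omega)
      omega
    have caseE : χ y0 u v = -1 → χ y0 u w = 1 → χ y0 v w = -1 → False := by
      intro hA1 hA2 hA3
      have := hint y0 hy0S u huS w hwS v hvS hy0u hy0w hy0v huw huv hvw.symm
        (by omega) (by omega) (by omega)
      omega
    rcases hE1 with hE1 | hE1
    · rcases hE2 with hE2 | hE2
      · exact caseA hE1 hE2
      · rcases hE3 with hE3 | hE3
        · have := caseB hE1 hE3; omega
        · exact caseC hE2 hE3
    · rcases hE3 with hE3 | hE3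
      · exact caseD hE1 hE3
      · rcases hE2 with hE2 | hE2
        · exact caseE hE1 hE2 hE3
        · exact caseC hE2 hE3

/-- Enumerate a finite set along a strict total order. -/
lemma exists_enum {T : Type*} [DecidableEq T] (X' : Finset T) (R : T → T → Prop)
    (htri : ∀ x ∈ X', ∀ y ∈ X', x ≠ y → R x y ∨ R y x)
    (hasym : ∀ x ∈ X', ∀ y ∈ X', R x y → R y x → False)
    (htrans : ∀ x ∈ X', ∀ y ∈ X', ∀ z ∈ X',
      x ≠ y → y ≠ z → x ≠ z → R x y → R y z → R x z)
    (v0 : T) :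
    ∃ e : ℕ → T, ∃ r : T → ℕ,
      (∀ i, i < X'.card → e i ∈ X') ∧
      (∀ x ∈ X', r x < X'.card ∧ e (r x) = x) ∧
      (∀ i, i < X'.card → r (e i) = i) ∧
      (∀ i j, i < X'.card → j < X'.card → (i < j ↔ R (e i) (e j))) := by
  classical
  have hirr : ∀ x ∈ X', R x x → False := fun x hx h => hasym x hx x hx h h
  letI : LinearOrder {x // x ∈ X'} :=
    { le := fun a b => a = b ∨ R a.1 b.1
      le_refl := fun a => Or.inl rfl
      le_trans := by
        rintro a b c (rfl | hab) h2
        · exact h2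
        rcases h2 with rfl | hbc
        · exact Or.inr hab
        · right
          have hab' : a.1 ≠ b.1 := fun h => hirr b.1 b.2 (h ▸ hab)
          have hbc' : b.1 ≠ c.1 := fun h => hirr c.1 c.2 (h ▸ hbc)
          by_cases hac : a.1 = c.1
          · exact absurd (hac ▸ hbc) (fun h => hasym a.1 a.2 b.1 b.2 hab h)
          · exact htrans a.1 a.2 b.1 b.2 c.1 c.2 hab' hbc' hac hab hbc
      le_antisymm := by
        rintro a b (rfl | hab) h2
        · rfl
        rcases h2 with rfl | hba
        · rfl
        · exact (hasym a.1 a.2 b.1 b.2 hab hba).elim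
      le_total := by
        intro a b
        by_cases hab : a = b
        · exact Or.inl (Or.inl hab)
        · rcases htri a.1 a.2 b.1 b.2 (fun h => hab (Subtype.ext h)) with h | h
          · exact Or.inl (Or.inr h)
          · exact Or.inr (Or.inr h)
      toDecidableLE := fun a b => Classical.dec _ }
  have hlt : ∀ a b : {x // x ∈ X'}, a < b ↔ R a.1 b.1 := by
    intro a b
    rw [lt_iff_le_not_ge]
    constructor
    · rintro ⟨rfl | hab, h2⟩
      · exact absurd (Or.inl rfl) h2
      · exact hab
    · intro h
      have hne : a.1 ≠ b.1 := fun he => hirr b.1 b.2 (he ▸ h)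
      refine ⟨Or.inr h, ?_⟩
      rintro (rfl | hba)
      · exact hne rfl
      · exact hasym a.1 a.2 b.1 b.2 h hba
  have hcard : Fintype.card {x // x ∈ X'} = X'.card := Fintype.card_coe X'
  let eqv := monoEquivOfFin {x // x ∈ X'} hcard
  refine ⟨fun i => if h : i < X'.card then (eqv ⟨i, h⟩).1 else v0,
    fun x => if h : x ∈ X' then (eqv.symm ⟨x, h⟩ : Fin X'.card).1 else 0, ?_, ?_, ?_, ?_⟩
  · intro i hi
    simp only [dif_pos hi]
    exact (eqv ⟨i, hi⟩).2
  · intro x hx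
    have hlt' := (eqv.symm ⟨x, hx⟩).isLt
    constructor
    · simp only [dif_pos hx]
      exact hlt'
    · simp only [dif_pos hx, dif_pos hlt']
      have he : (⟨(eqv.symm ⟨x, hx⟩ : Fin X'.card).1, hlt'⟩ : Fin X'.card)
          = eqv.symm ⟨x, hx⟩ := rfl
      rw [he, OrderIso.apply_symm_apply]
  · intro i hi
    simp only [dif_pos hi, dif_pos (eqv ⟨i, hi⟩).2]
    have he : (⟨(eqv ⟨i, hi⟩).1, (eqv ⟨i, hi⟩).2⟩ : {x // x ∈ X'}) = eqv ⟨i, hi⟩ := rfl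
    rw [he, OrderIso.symm_apply_apply]
  · intro i j hi hj
    simp only [dif_pos hi, dif_pos hj]
    rw [← hlt (eqv ⟨i, hi⟩) (eqv ⟨j, hj⟩), OrderIso.lt_iff_lt]
    exact ⟨fun h => h, fun h => h⟩

lemma bowtie_sgn {T : Type*} [DecidableEq T] {χ ξ : T → T → T → ℤ} {X Y : Finset T}
    {xs ys : T} (hχ : SignFnOn χ (insert xs X)) (hξ : SignFnOn ξ (insert ys Y))
    (hdisj : Disjoint X Y) (hxs : xs ∉ X ∪ Y) (hys : ys ∉ X ∪ Y) :
    SignFnOn (bowtie χ X xs ξ Y ys) (X ∪ Y) := by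
  have hxsX : xs ∉ X := fun h => hxs (Finset.mem_union_left _ h)
  have hysY : ys ∉ Y := fun h => hys (Finset.mem_union_right _ h)
  have memX : ∀ {t : T}, t ∈ X → t ∈ insert xs X := fun ht => Finset.mem_insert_of_mem ht
  have memY : ∀ {t : T}, t ∈ Y → t ∈ insert ys Y := fun ht => Finset.mem_insert_of_mem ht
  have hxsm : xs ∈ insert xs X := Finset.mem_insert_self _ _
  have hysm : ys ∈ insert ys Y := Finset.mem_insert_self _ _
  have neqxs : ∀ {t : T}, t ∈ X → t ≠ xs := fun ht h => hxsX (h ▸ ht)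
  have neqys : ∀ {t : T}, t ∈ Y → t ≠ ys := fun ht h => hysY (h ▸ ht)
  have hYX : ∀ {t : T}, t ∈ Y → t ∉ X := fun ht hx => Finset.disjoint_left.1 hdisj hx ht
  have hXY : ∀ {t : T}, t ∈ X → t ∉ Y := fun hx hy => Finset.disjoint_left.1 hdisj hx hy
  intro u hu v hv w hw huv hvw huw
  rcases Finset.mem_union.1 hu with huX | huY <;>
    rcases Finset.mem_union.1 hv with hvX | hvY <;>
      rcases Finset.mem_union.1 hw with hwX | hwY
  · simp only [bowtie, projTo, if_pos huX, if_pos hvX, if_pos hwX]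
    norm_num
    exact hχ u (memX huX) v (memX hvX) w (memX hwX) huv hvw huw
  · simp only [bowtie, projTo, if_pos huX, if_pos hvX, if_neg (hYX hwY)]
    norm_num
    exact hχ u (memX huX) v (memX hvX) xs hxsm huv (neqxs hvX) (neqxs huX)
  · simp only [bowtie, projTo, if_pos huX, if_neg (hYX hvY), if_pos hwX]
    norm_num
    exact hχ u (memX huX) xs hxsm w (memX hwX) (neqxs huX) (Ne.symm (neqxs hwX)) huw
  · simp only [bowtie, projTo, if_pos huX, if_neg (hYX hvY), if_neg (hYX hwY), if_neg (hXY huX), if_pos hvY, if_pos hwY]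
    norm_num
    exact hξ ys hysm v (memY hvY) w (memY hwY) (Ne.symm (neqys hvY)) hvw
      (Ne.symm (neqys hwY))
  · simp only [bowtie, projTo, if_neg (hYX huY), if_pos hvX, if_pos hwX]
    norm_num
    exact hχ xs hxsm v (memX hvX) w (memX hwX) (Ne.symm (neqxs hvX)) hvw
      (Ne.symm (neqxs hwX))
  · simp only [bowtie, projTo, if_neg (hYX huY), if_pos hvX, if_neg (hYX hwY), if_pos huY, if_neg (hXY hvX), if_pos hwY]
    norm_num
    exact hξ u (memY huY) ys hysm w (memY hwY) (neqys huY) (Ne.symm (neqys hwY)) huw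
  · simp only [bowtie, projTo, if_neg (hYX huY), if_neg (hYX hvY), if_pos hwX, if_pos huY, if_pos hvY, if_neg (hXY hwX)]
    norm_num
    exact hξ u (memY huY) v (memY hvY) ys hysm huv (neqys hvY) (neqys huY)
  · simp only [bowtie, projTo, if_neg (hYX huY), if_neg (hYX hvY), if_neg (hYX hwY), if_pos huY, if_pos hvY, if_pos hwY]
    norm_num
    exact hξ u (memY huY) v (memY hvY) w (memY hwY) huv hvw huw

lemma crosses_swap_pairs {T : Type*} {κ : T → T → T → ℤ} {p q r s : T} :
    Crosses κ p q r s ↔ Crosses κ r s p q := by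
  unfold Crosses
  constructor <;> rintro ⟨h1, h2⟩ <;> exact ⟨by omega, by omega⟩

lemma crosses_swap_fst {T : Type*} {κ : T → T → T → ℤ} {W : Finset T} {p q r s : T}
    (hk : SignFnOn κ W) (hp : p ∈ W) (hq : q ∈ W) (hr : r ∈ W) (hs : s ∈ W)
    (hpq : p ≠ q) (hpr : p ≠ r) (hps : p ≠ s) (hqr : q ≠ r) (hqs : q ≠ s) :
    Crosses κ p q r s ↔ Crosses κ q p r s := by
  have e1 : κ p q r = -κ q p r := sgn_swap12 hk hp hq hr hpq hqr hpr
  have e2 : κ p q s = -κ q p s := sgn_swap12 hk hp hq hs hpq hqs hps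
  unfold Crosses
  constructor <;> rintro ⟨h1, h2⟩ <;> exact ⟨by omega, by omega⟩

lemma crosses_swap_snd {T : Type*} {κ : T → T → T → ℤ} {W : Finset T} {p q r s : T}
    (hk : SignFnOn κ W) (hp : p ∈ W) (hq : q ∈ W) (hr : r ∈ W) (hs : s ∈ W)
    (hpr : p ≠ r) (hps : p ≠ s) (hqr : q ≠ r) (hqs : q ≠ s) (hrs : r ≠ s) :
    Crosses κ p q r s ↔ Crosses κ p q s r := by
  rw [crosses_swap_pairs, crosses_swap_fst hk hr hs hp hq hrs hpr.symm hqr.symm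
    hps.symm hqs.symm, crosses_swap_pairs]

lemma crosses_iff {T : Type*} [DecidableEq T] {χ ξ : T → T → T → ℤ} {X Y : Finset T}
    {xs ys : T} (hχ : SignFnOn χ (insert xs X)) (hξ : SignFnOn ξ (insert ys Y))
    (hdisj : Disjoint X Y) (hxs : xs ∉ X ∪ Y) (hys : ys ∉ X ∪ Y)
    {x z y t : T} (hx : x ∈ X) (hz : z ∈ X) (hy : y ∈ Y) (ht : t ∈ Y)
    (hxz : x ≠ z) (hyt : y ≠ t) :
    Crosses (bowtie χ X xs ξ Y ys) x y z t ↔ χ xs x z = ξ ys y t := by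
  have hxsX : xs ∉ X := fun h => hxs (Finset.mem_union_left _ h)
  have hysY : ys ∉ Y := fun h => hys (Finset.mem_union_right _ h)
  have memX : ∀ {a : T}, a ∈ X → a ∈ insert xs X := fun ha => Finset.mem_insert_of_mem ha
  have memY : ∀ {a : T}, a ∈ Y → a ∈ insert ys Y := fun ha => Finset.mem_insert_of_mem ha
  have hxsm : xs ∈ insert xs X := Finset.mem_insert_self _ _
  have hysm : ys ∈ insert ys Y := Finset.mem_insert_self _ _
  have neqxs : ∀ {a : T}, a ∈ X → a ≠ xs := fun ha h => hxsX (h ▸ ha)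
  have neqys : ∀ {a : T}, a ∈ Y → a ≠ ys := fun ha h => hysY (h ▸ ha)
  have hYX : ∀ {a : T}, a ∈ Y → a ∉ X := fun ha h => Finset.disjoint_left.1 hdisj h ha
  have hXY : ∀ {a : T}, a ∈ X → a ∉ Y := fun ha h => Finset.disjoint_left.1 hdisj ha h
  have k1 : bowtie χ X xs ξ Y ys x y z = χ x xs z := by
    simp only [bowtie, projTo, if_pos hx, if_neg (hYX hy), if_pos hz]
    norm_num
  have k2 : bowtie χ X xs ξ Y ys x y t = ξ ys y t := by
    simp only [bowtie, projTo, if_pos hx, if_neg (hYX hy), if_neg (hYX ht),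
      if_neg (hXY hx), if_pos hy, if_pos ht]
    norm_num
  have k3 : bowtie χ X xs ξ Y ys z t x = χ z xs x := by
    simp only [bowtie, projTo, if_pos hz, if_neg (hYX ht), if_pos hx]
    norm_num
  have k4 : bowtie χ X xs ξ Y ys z t y = ξ ys t y := by
    simp only [bowtie, projTo, if_pos hz, if_neg (hYX ht), if_neg (hYX hy),
      if_neg (hXY hz), if_pos ht, if_pos hy]
    norm_num
  have s1 : χ x xs z = -χ xs x z := sgn_swap12 hχ (memX hx) hxsm (memX hz)
    (neqxs hx) (Ne.symm (neqxs hz)) hxz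
  have s2 : χ z xs x = -χ xs z x := sgn_swap12 hχ (memX hz) hxsm (memX hx)
    (neqxs hz) (Ne.symm (neqxs hx)) hxz.symm
  have s3 : χ xs x z = -χ xs z x := sgn_swap23 hχ hxsm (memX hx) (memX hz)
    (Ne.symm (neqxs hx)) hxz (Ne.symm (neqxs hz))
  have s4 : ξ ys y t = -ξ ys t y := sgn_swap23 hξ hysm (memY hy) (memY ht)
    (Ne.symm (neqys hy)) hyt (Ne.symm (neqys ht))
  unfold Crosses
  rw [k1, k2, k3, k4]
  constructor
  · rintro ⟨h1, h2⟩; omega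
  · intro h; exact ⟨by omega, by omega⟩

lemma noncross_char {T : Type*} [DecidableEq T] {χ ξ : T → T → T → ℤ} {X Y : Finset T}
    {xs ys : T} (hχ : SignFnOn χ (insert xs X)) (hξ : SignFnOn ξ (insert ys Y))
    (hdisj : Disjoint X Y) (hxs : xs ∉ X ∪ Y) (hys : ys ∉ X ∪ Y)
    {X' Y' : Finset T} (hX' : X' ⊆ X) (hY' : Y' ⊆ Y)
    {H : Finset (Sym2 T)} (hE : EdgesBetween X' Y' H) :
    NoncrossingF (bowtie χ X xs ξ Y ys) H ↔
      ∀ x ∈ X', ∀ z ∈ X', ∀ y ∈ Y', ∀ t ∈ Y',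
        Sym2.mk x y ∈ H → Sym2.mk z t ∈ H → x ≠ z → y ≠ t →
        ¬ Crosses (bowtie χ X xs ξ Y ys) x y z t := by
  have hk := bowtie_sgn hχ hξ hdisj hxs hys
  have hd' : ∀ {a b : T}, a ∈ X' → b ∈ Y' → a ≠ b := fun ha hb h =>
    Finset.disjoint_left.1 hdisj (hX' ha) (h ▸ hY' hb)
  have mX : ∀ {a : T}, a ∈ X' → a ∈ X ∪ Y := fun h => Finset.mem_union_left _ (hX' h)
  have mY : ∀ {a : T}, a ∈ Y' → a ∈ X ∪ Y := fun h => Finset.mem_union_right _ (hY' h)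
  constructor
  · intro hN x hx z hz y hy t ht h1 h2 hxz hyt
    exact hN x y z t h1 h2 (hd' hx hy) (hd' hz ht) hxz (hd' hx ht)
      (Ne.symm (hd' hz hy)) hyt
  · intro hA p q r s h1 h2 hpq hrs hpr hps hqr hqs
    obtain ⟨x0, hx0, y0, hy0, he⟩ := hE _ h1
    obtain ⟨z0, hz0, t0, ht0, hf⟩ := hE _ h2
    rcases Sym2.eq_iff.1 he with ⟨rfl, rfl⟩ | ⟨rfl, rfl⟩ <;>
      rcases Sym2.eq_iff.1 hf with ⟨rfl, rfl⟩ | ⟨rfl, rfl⟩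
    · exact hA p hx0 r hz0 q hy0 s ht0 h1 h2 hpr hqs
    · rw [crosses_swap_snd hk (mX hx0) (mY hy0) (mY ht0) (mX hz0) hpr hps hqr hqs hrs]
      exact hA p hx0 s hz0 q hy0 r ht0 h1 (by rw [Sym2.eq_swap]; exact h2) hps hqr
    · rw [crosses_swap_fst hk (mY hy0) (mX hx0) (mX hz0) (mY ht0) hpq hpr hps hqr hqs]
      exact hA q hx0 r hz0 p hy0 s ht0 (by rw [Sym2.eq_swap]; exact h1) h2 hqr hps
    · rw [crosses_swap_fst hk (mY hy0) (mX hx0) (mY ht0) (mX hz0) hpq hpr hps hqr hqs,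
        crosses_swap_snd hk (mX hx0) (mY hy0) (mY ht0) (mX hz0) hqr hqs hpr hps hrs]
      exact hA q hx0 s hz0 p hy0 r ht0 (by rw [Sym2.eq_swap]; exact h1)
        (by rw [Sym2.eq_swap]; exact h2) hqs hpr

theorem card_maxNoncrossing
    {T : Type*} [DecidableEq T] (χ ξ : T → T → T → ℤ)
    (X Y : Finset T) (xs ys : T)
    (hdisj : Disjoint X Y) (hxs : xs ∉ X ∪ Y) (hys : ys ∉ X ∪ Y) (hxy : xs ≠ ys)
    (hχ : ChirotopeOn χ (insert xs X)) (hξ : ChirotopeOn ξ (insert ys Y))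
    (hx : ExtremeInOn χ (insert xs X) xs) (hy : ExtremeInOn ξ (insert ys Y) ys)
    (X' Y' : Finset T) (hX' : X' ⊆ X) (hY' : Y' ⊆ Y)
    (hX'ne : X'.Nonempty) (hY'ne : Y'.Nonempty) :
    Nat.card {H : Finset (Sym2 T) //
        MaxNoncrossingBetween (bowtie χ X xs ξ Y ys) X' Y' H} =
      Nat.choose (X'.card + Y'.card - 2) (Y'.card - 1) := by
  classical
  have hxsX : xs ∉ X := fun h => hxs (Finset.mem_union_left _ h)
  have hysY : ys ∉ Y := fun h => hys (Finset.mem_union_right _ h)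
  have memX : ∀ {a : T}, a ∈ X' → a ∈ insert xs X :=
    fun ha => Finset.mem_insert_of_mem (hX' ha)
  have memY : ∀ {a : T}, a ∈ Y' → a ∈ insert ys Y :=
    fun ha => Finset.mem_insert_of_mem (hY' ha)
  have hxsm : xs ∈ insert xs X := Finset.mem_insert_self _ _
  have hysm : ys ∈ insert ys Y := Finset.mem_insert_self _ _
  have neqxs : ∀ {a : T}, a ∈ X' → a ≠ xs := fun ha h => hxsX (h ▸ hX' ha)
  have neqys : ∀ {a : T}, a ∈ Y' → a ≠ ys := fun ha h => hysY (h ▸ hY' ha)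
  have hd' : ∀ {a b : T}, a ∈ X' → b ∈ Y' → a ≠ b := fun ha hb h =>
    Finset.disjoint_left.1 hdisj (hX' ha) (h ▸ hY' hb)
  obtain ⟨eX, rX, heX1, heX2, heX3, heX4⟩ :=
    exists_enum X' (fun a b => a ≠ b ∧ χ xs a b = 1)
      (by
        intro a ha b hb hab
        have hv := sgn_val hχ.1 hxsm (memX ha) (memX hb) (Ne.symm (neqxs ha)) hab
          (Ne.symm (neqxs hb))
        have hs := sgn_swap23 hχ.1 hxsm (memX ha) (memX hb) (Ne.symm (neqxs ha)) hab
          (Ne.symm (neqxs hb))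
        rcases hv with h | h
        · exact Or.inl ⟨hab, h⟩
        · exact Or.inr ⟨hab.symm, by omega⟩)
      (by
        rintro a ha b hb ⟨hab, h1⟩ ⟨-, h2⟩
        have hs := sgn_swap23 hχ.1 hxsm (memX ha) (memX hb) (Ne.symm (neqxs ha)) hab
          (Ne.symm (neqxs hb))
        omega)
      (by
        rintro a ha b hb c hc hab hbc hac ⟨-, h1⟩ ⟨-, h2⟩
        exact ⟨hac, chi_trans hχ hx a (memX ha) b (memX hb) c (memX hc) (neqxs ha)
          (neqxs hb) (neqxs hc) hab hbc hac h1 h2⟩)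
      xs
  obtain ⟨eY, rY, heY1, heY2, heY3, heY4⟩ :=
    exists_enum Y' (fun a b => a ≠ b ∧ ξ ys b a = 1)
      (by
        intro a ha b hb hab
        have hv := sgn_val hξ.1 hysm (memY hb) (memY ha) (Ne.symm (neqys hb)) hab.symm
          (Ne.symm (neqys ha))
        have hs := sgn_swap23 hξ.1 hysm (memY hb) (memY ha) (Ne.symm (neqys hb)) hab.symm
          (Ne.symm (neqys ha))
        rcases hv with h | h
        · exact Or.inl ⟨hab, h⟩
        · exact Or.inr ⟨hab.symm, by omega⟩)
      (by
        rintro a ha b hb ⟨hab, h1⟩ ⟨-, h2⟩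
        have hs := sgn_swap23 hξ.1 hysm (memY hb) (memY ha) (Ne.symm (neqys hb)) hab.symm
          (Ne.symm (neqys ha))
        omega)
      (by
        rintro a ha b hb c hc hab hbc hac ⟨-, h1⟩ ⟨-, h2⟩
        exact ⟨hac, chi_trans hξ hy c (memY hc) b (memY hb) a (memY ha) (neqys hc)
          (neqys hb) (neqys ha) hbc.symm hab.symm hac.symm h2 h1⟩)
      ys
  have hm1 : 1 ≤ X'.card := Finset.card_pos.2 hX'ne
  have hn1 : 1 ≤ Y'.card := Finset.card_pos.2 hY'ne
  have hRX : ∀ x ∈ X', ∀ z ∈ X', x ≠ z → (rX x < rX z ↔ χ xs x z = 1) := by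
    intro x hxm z hzm hxz
    have h1 := heX2 x hxm
    have h2 := heX2 z hzm
    have h4 := heX4 (rX x) (rX z) h1.1 h2.1
    rw [h1.2, h2.2] at h4
    exact ⟨fun h => (h4.1 h).2, fun h => h4.2 ⟨hxz, h⟩⟩
  have hRY : ∀ y ∈ Y', ∀ t ∈ Y', y ≠ t → (rY y < rY t ↔ ξ ys t y = 1) := by
    intro y hym t htm hyt
    have h1 := heY2 y hym
    have h2 := heY2 t htm
    have h4 := heY4 (rY y) (rY t) h1.1 h2.1
    rw [h1.2, h2.2] at h4
    exact ⟨fun h => (h4.1 h).2, fun h => h4.2 ⟨hyt, h⟩⟩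
  have hinjX : ∀ x ∈ X', ∀ z ∈ X', rX x = rX z → x = z := by
    intro x hxm z hzm h
    have h1 := (heX2 x hxm).2
    have h2 := (heX2 z hzm).2
    rw [← h1, ← h2, h]
  have hinjY : ∀ y ∈ Y', ∀ t ∈ Y', rY y = rY t → y = t := by
    intro y hym t htm h
    have h1 := (heY2 y hym).2
    have h2 := (heY2 t htm).2
    rw [← h1, ← h2, h]
  have hcmp : ∀ x ∈ X', ∀ z ∈ X', ∀ y ∈ Y', ∀ t ∈ Y', x ≠ z → y ≠ t →
      (¬ Crosses (bowtie χ X xs ξ Y ys) x y z t ↔ (rX x < rX z ↔ rY y < rY t)) := by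
    intro x hxm z hzm y hym t htm hxz hyt
    rw [crosses_iff hχ.1 hξ.1 hdisj hxs hys (hX' hxm) (hX' hzm) (hY' hym) (hY' htm)
      hxz hyt, hRX x hxm z hzm hxz, hRY y hym t htm hyt]
    have v1 := sgn_val hχ.1 hxsm (memX hxm) (memX hzm) (Ne.symm (neqxs hxm)) hxz
      (Ne.symm (neqxs hzm))
    have v2 := sgn_val hξ.1 hysm (memY htm) (memY hym) (Ne.symm (neqys htm)) hyt.symm
      (Ne.symm (neqys hym))
    have s4 := sgn_swap23 hξ.1 hysm (memY hym) (memY htm) (Ne.symm (neqys hym)) hyt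
      (Ne.symm (neqys htm))
    constructor
    · intro h
      constructor <;> intro h2 <;> omega
    · intro h h2
      rcases v1 with v | v
      · have := h.1 v; omega
      · have h3 : ξ ys t y ≠ 1 := fun hh => by have := h.2 hh; omega
        omega
  set F : Sym2 T → ℕ × ℕ := Sym2.lift ⟨fun a b =>
      ((if a ∈ X' then rX a else 0) + (if b ∈ X' then rX b else 0),
       (if a ∈ Y' then rY a else 0) + (if b ∈ Y' then rY b else 0)),
    fun a b => by simp [add_comm]⟩ with hFdef
  set G : ℕ × ℕ → Sym2 T := fun p => Sym2.mk (eX p.1) (eY p.2) with hGdef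
  have hF : ∀ x ∈ X', ∀ y ∈ Y', F (Sym2.mk x y) = (rX x, rY y) := by
    intro x hxm y hym
    have hxY : x ∉ Y' := fun h => (hd' hxm h) rfl
    have hyX : y ∉ X' := fun h => (hd' h hym) rfl
    rw [hFdef]
    simp [Sym2.lift_mk, hxm, hym, hxY, hyX]
  have hG : ∀ p : ℕ × ℕ, p.1 < X'.card → p.2 < Y'.card → F (G p) = p := by
    intro p h1 h2
    have := hF (eX p.1) (heX1 _ h1) (eY p.2) (heY1 _ h2)
    rw [hGdef]
    simp only []
    rw [this, heX3 _ h1, heY3 _ h2]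
  have hGF : ∀ x ∈ X', ∀ y ∈ Y', G (F (Sym2.mk x y)) = Sym2.mk x y := by
    intro x hxm y hym
    rw [hF x hxm y hym, hGdef]
    simp only []
    rw [(heX2 x hxm).2, (heY2 y hym).2]
  have hmkeq : ∀ {x y z t : T}, x ∈ X' → y ∈ Y' → z ∈ X' → t ∈ Y' →
      Sym2.mk x y = Sym2.mk z t → x = z ∧ y = t := by
    intro x y z t hxm hym hzm htm h
    rcases Sym2.eq_iff.1 h with ⟨h1, h2⟩ | ⟨h1, h2⟩
    · exact ⟨h1, h2⟩
    · exact absurd h1 (hd' hxm htm)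
  have hEins : ∀ x ∈ X', ∀ y ∈ Y', ∀ H : Finset (Sym2 T), EdgesBetween X' Y' H →
      EdgesBetween X' Y' (insert (Sym2.mk x y) H) := by
    intro x hxm y hym H hE e he
    rcases Finset.mem_insert.1 he with rfl | he
    · exact ⟨x, hxm, y, hym, rfl⟩
    · exact hE e he
  have fwd : ∀ H, MaxNoncrossingBetween (bowtie χ X xs ξ Y ys) X' Y' H →
      GoodChain X'.card Y'.card (H.image F) := by
    intro H hH
    obtain ⟨hE, hN, hM⟩ := hH
    have hchar := (noncross_char hχ.1 hξ.1 hdisj hxs hys hX' hY' hE).1 hN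
    refine ⟨?_, ?_, ?_⟩
    · intro p hp
      rcases Finset.mem_image.1 hp with ⟨e, heH, rfl⟩
      obtain ⟨x0, hx0, y0, hy0, rfl⟩ := hE e heH
      rw [hF x0 hx0 y0 hy0]
      exact ⟨(heX2 x0 hx0).1, (heY2 y0 hy0).1⟩
    · intro p hp q hq
      rcases Finset.mem_image.1 hp with ⟨e, heH, rfl⟩
      rcases Finset.mem_image.1 hq with ⟨f, hfH, rfl⟩
      obtain ⟨x0, hx0, y0, hy0, rfl⟩ := hE e heH
      obtain ⟨z0, hz0, t0, ht0, rfl⟩ := hE f hfH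
      rw [hF x0 hx0 y0 hy0, hF z0 hz0 t0 ht0]
      by_cases hxz : x0 = z0
      · subst hxz
        rcases Nat.le_total (rY y0) (rY t0) with h | h
        · exact Or.inl ⟨le_rfl, h⟩
        · exact Or.inr ⟨le_rfl, h⟩
      · by_cases hyt : y0 = t0
        · subst hyt
          rcases Nat.le_total (rX x0) (rX z0) with h | h
          · exact Or.inl ⟨h, le_rfl⟩
          · exact Or.inr ⟨h, le_rfl⟩
        · have hncr := hchar x0 hx0 z0 hz0 y0 hy0 t0 ht0 heH hfH hxz hyt
          have hiff := (hcmp x0 hx0 z0 hz0 y0 hy0 t0 ht0 hxz hyt).1 hncr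
          rcases Nat.lt_trichotomy (rX x0) (rX z0) with h | h | h
          · exact Or.inl ⟨le_of_lt h, le_of_lt (hiff.1 h)⟩
          · exact absurd (hinjX x0 hx0 z0 hz0 h) hxz
          · have h2 : rY t0 < rY y0 := by
              rcases Nat.lt_trichotomy (rY y0) (rY t0) with h2 | h2 | h2
              · exact absurd (hiff.2 h2) (by omega)
              · exact absurd (hinjY y0 hy0 t0 ht0 h2) hyt
              · exact h2
            exact Or.inr ⟨le_of_lt h, le_of_lt h2⟩
    · intro p hp1 hp2 hcomp
      have hx0 : eX p.1 ∈ X' := heX1 _ hp1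
      have hy0 : eY p.2 ∈ Y' := heY1 _ hp2
      have hrx : rX (eX p.1) = p.1 := heX3 _ hp1
      have hry : rY (eY p.2) = p.2 := heY3 _ hp2
      have hEi := hEins _ hx0 _ hy0 H hE
      have hNi : NoncrossingF (bowtie χ X xs ξ Y ys)
          (insert (Sym2.mk (eX p.1) (eY p.2)) H) := by
        rw [noncross_char hχ.1 hξ.1 hdisj hxs hys hX' hY' hEi]
        intro x1 hx1 z1 hz1 y1 hy1 t1 ht1 he1 he2 hxz1 hyt1
        rcases Finset.mem_insert.1 he1 with heq1 | hin1 <;>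
          rcases Finset.mem_insert.1 he2 with heq2 | hin2
        · obtain ⟨ha1, hb1⟩ := hmkeq hx1 hy1 hx0 hy0 heq1
          obtain ⟨ha2, hb2⟩ := hmkeq hz1 ht1 hx0 hy0 heq2
          exact absurd (ha1.trans ha2.symm) hxz1
        · obtain ⟨ha1, hb1⟩ := hmkeq hx1 hy1 hx0 hy0 heq1
          have hrx1 : rX x1 = p.1 := by rw [ha1]; exact hrx
          have hry1 : rY y1 = p.2 := by rw [hb1]; exact hry
          apply (hcmp _ hx1 _ hz1 _ hy1 _ ht1 hxz1 hyt1).2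
          have hq : (rX z1, rY t1) ∈ H.image F :=
            Finset.mem_image.2 ⟨_, hin2, hF z1 hz1 t1 ht1⟩
          have hco := hcomp _ hq
          have hne1 : rX x1 ≠ rX z1 := fun h => hxz1 (hinjX _ hx1 _ hz1 h)
          have hne2 : rY y1 ≠ rY t1 := fun h => hyt1 (hinjY _ hy1 _ ht1 h)
          simp only at hco
          constructor <;> intro h <;> omega
        · obtain ⟨ha2, hb2⟩ := hmkeq hz1 ht1 hx0 hy0 heq2
          have hrx1 : rX z1 = p.1 := by rw [ha2]; exact hrx
          have hry1 : rY t1 = p.2 := by rw [hb2]; exact hry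
          apply (hcmp _ hx1 _ hz1 _ hy1 _ ht1 hxz1 hyt1).2
          have hq : (rX x1, rY y1) ∈ H.image F :=
            Finset.mem_image.2 ⟨_, hin1, hF x1 hx1 y1 hy1⟩
          have hco := hcomp _ hq
          have hne1 : rX x1 ≠ rX z1 := fun h => hxz1 (hinjX _ hx1 _ hz1 h)
          have hne2 : rY y1 ≠ rY t1 := fun h => hyt1 (hinjY _ hy1 _ ht1 h)
          simp only at hco
          constructor <;> intro h <;> omega
        · exact hchar x1 hx1 z1 hz1 y1 hy1 t1 ht1 hin1 hin2 hxz1 hyt1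
      have hmem := hM _ hx0 _ hy0 hNi
      refine Finset.mem_image.2 ⟨_, hmem, ?_⟩
      rw [hF _ hx0 _ hy0, hrx, hry]
  have bwd : ∀ S, GoodChain X'.card Y'.card S →
      MaxNoncrossingBetween (bowtie χ X xs ξ Y ys) X' Y' (S.image G) := by
    intro S hS
    have hEg : EdgesBetween X' Y' (S.image G) := by
      intro e he
      rcases Finset.mem_image.1 he with ⟨p, hp, rfl⟩
      exact ⟨eX p.1, heX1 _ (hS.1 p hp).1, eY p.2, heY1 _ (hS.1 p hp).2, rfl⟩
    have hdec : ∀ {x y : T}, x ∈ X' → y ∈ Y' → Sym2.mk x y ∈ S.image G →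
        (rX x, rY y) ∈ S := by
      intro x y hxm hym hmem
      rcases Finset.mem_image.1 hmem with ⟨p, hp, hpe⟩
      have hb := hS.1 p hp
      obtain ⟨h1, h2⟩ := hmkeq (heX1 _ hb.1) (heY1 _ hb.2) hxm hym hpe
      have hh1 : rX x = p.1 := by rw [← h1]; exact heX3 _ hb.1
      have hh2 : rY y = p.2 := by rw [← h2]; exact heY3 _ hb.2
      have hpp : (rX x, rY y) = p := Prod.ext hh1 hh2
      rw [hpp]; exact hp
    refine ⟨hEg, ?_, ?_⟩
    · rw [noncross_char hχ.1 hξ.1 hdisj hxs hys hX' hY' hEg]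
      intro x hx1 z hz1 y hy1 t ht1 he1 he2 hxz hyt
      apply (hcmp _ hx1 _ hz1 _ hy1 _ ht1 hxz hyt).2
      have hp := hdec hx1 hy1 he1
      have hq := hdec hz1 ht1 he2
      have hco := hS.2.1 _ hp _ hq
      have hne1 : rX x ≠ rX z := fun h => hxz (hinjX _ hx1 _ hz1 h)
      have hne2 : rY y ≠ rY t := fun h => hyt (hinjY _ hy1 _ ht1 h)
      simp only at hco
      constructor <;> intro h <;> omega
    · intro x hxm y hym hNi
      have hEi := hEins _ hxm _ hym _ hEg
      have hchar := (noncross_char hχ.1 hξ.1 hdisj hxs hys hX' hY' hEi).1 hNi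
      have hmem : (rX x, rY y) ∈ S := by
        apply hS.2.2 _ (heX2 x hxm).1 (heY2 y hym).1
        intro q hq
        have hqb := hS.1 q hq
        have hz1 : eX q.1 ∈ X' := heX1 _ hqb.1
        have ht1 : eY q.2 ∈ Y' := heY1 _ hqb.2
        have hq1 : rX (eX q.1) = q.1 := heX3 _ hqb.1
        have hq2 : rY (eY q.2) = q.2 := heY3 _ hqb.2
        by_cases hxz : x = eX q.1
        · have h1 : rX x = q.1 := by rw [hxz]; exact hq1
          rcases Nat.le_total (rY y) q.2 with h | h
          · exact Or.inl ⟨by omega, by omega⟩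
          · exact Or.inr ⟨by omega, by omega⟩
        · by_cases hyt : y = eY q.2
          · have h2 : rY y = q.2 := by rw [hyt]; exact hq2
            rcases Nat.le_total (rX x) q.1 with h | h
            · exact Or.inl ⟨by omega, by omega⟩
            · exact Or.inr ⟨by omega, by omega⟩
          · have hncr := hchar x hxm (eX q.1) hz1 y hym (eY q.2) ht1
              (Finset.mem_insert_self _ _)
              (Finset.mem_insert_of_mem (Finset.mem_image.2 ⟨q, hq, rfl⟩)) hxz hyt
            have hiff := (hcmp _ hxm _ hz1 _ hym _ ht1 hxz hyt).1 hncr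
            have hne1 : rX x ≠ rX (eX q.1) := fun h => hxz (hinjX _ hxm _ hz1 h)
            have hne2 : rY y ≠ rY (eY q.2) := fun h => hyt (hinjY _ hym _ ht1 h)
            rcases Nat.lt_trichotomy (rX x) (rX (eX q.1)) with h | h | h
            · have := hiff.1 h
              exact Or.inl ⟨by omega, by omega⟩
            · exact absurd h hne1
            · have h2 : rY (eY q.2) < rY y := by
                rcases Nat.lt_trichotomy (rY y) (rY (eY q.2)) with h2 | h2 | h2
                · exact absurd (hiff.2 h2) (by omega)
                · exact absurd h2 hne2
                · exact h2
              exact Or.inr ⟨by omega, by omega⟩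
      refine Finset.mem_image.2 ⟨_, hmem, ?_⟩
      rw [hGdef]
      simp only []
      rw [(heX2 x hxm).2, (heY2 y hym).2]
  have EQ : {H : Finset (Sym2 T) //
      MaxNoncrossingBetween (bowtie χ X xs ξ Y ys) X' Y' H} ≃
      {S : Finset (ℕ × ℕ) // GoodChain X'.card Y'.card S} := by
    refine ⟨fun H => ⟨H.1.image F, fwd H.1 H.2⟩, fun S => ⟨S.1.image G, bwd S.1 S.2⟩,
      ?_, ?_⟩
    · rintro ⟨H, hH⟩
      apply Subtype.ext
      show (H.image F).image G = H
      rw [Finset.image_image]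
      apply Finset.ext
      intro a
      simp only [Finset.mem_image, Function.comp_apply]
      constructor
      · rintro ⟨e, he, rfl⟩
        obtain ⟨x0, hx0, y0, hy0, rfl⟩ := hH.1 e he
        rw [hGF x0 hx0 y0 hy0]
        exact he
      · intro ha
        obtain ⟨x0, hx0, y0, hy0, rfl⟩ := hH.1 a ha
        exact ⟨_, ha, hGF x0 hx0 y0 hy0⟩
    · rintro ⟨S, hS⟩
      apply Subtype.ext
      show (S.image G).image F = S
      rw [Finset.image_image]
      apply Finset.ext
      intro p
      simp only [Finset.mem_image, Function.comp_apply]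
      constructor
      · rintro ⟨q, hq, rfl⟩
        rw [hG q (hS.1 q hq).1 (hS.1 q hq).2]
        exact hq
      · intro hp
        exact ⟨p, hp, hG p (hS.1 p hp).1 (hS.1 p hp).2⟩
  rw [Nat.card_congr EQ]
  exact card_goodChain (X'.card + Y'.card) X'.card Y'.card le_rfl hm1 hn1
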